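/- Let (d_k,...,d_0)_b be an (n,b,σ)-permutiple with carries c, and (d_{π(k)},...,d_{π(0)})_b an (n,b,τ)-permutiple whose carries are exactly c_{π(j)} at position j. Then n·d_{σ(j)} ≡ n·d_{πτπ^{-1}(j)} (mod b) for all 0 ≤ j ≤ k. -/

import Mathlib

/-- Corollary (base_perm): if (d_k,...,d_0)_b is an (n,b,σ)-permutiple with
carries c, and (d_{π(k)},...,d_{π(0)})_b is an (n,b,τ)-permutiple with carries
c_{π(j)}, then n·d_{σ(j)} ≡ n·d_{πτπ⁻¹(j)} (mod b) for all j. -/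
theorem stmt_15 (n b k : ℕ) (hn : 1 < n) (hnb : n < b)
    (σ τ π : Equiv.Perm (Fin (k + 1)))
    (d : Fin (k + 1) → ℕ) (hd : ∀ j, d j < b)
    (c : Fin (k + 1) → ℕ) (hc0 : c 0 = 0) (hcb : ∀ j, c j ≤ n - 1)
    (hπ0 : c (π 0) = 0)
    (hrel₁ : ∀ j : Fin (k + 1), (b : ℤ) * c (j + 1) - c j = n * d (σ j) - d j)
    (hrel₂ : ∀ j : Fin (k + 1),
      (b : ℤ) * c (π (j + 1)) - c (π j) = n * d (π (τ j)) - d (π j)) :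
    ∀ j : Fin (k + 1),
      ((n : ℤ) * d (σ j)) ≡ (n : ℤ) * d ((π * τ * π⁻¹) j) [ZMOD b] := by
  intro j
  have h1 := hrel₁ j
  have h2 := hrel₂ (π⁻¹ j)
  rw [show π (π⁻¹ j) = j by simp] at h2
  have hπ : ((π * τ * π⁻¹) j) = π (τ (π⁻¹ j)) := rfl
  rw [hπ]
  have : (n : ℤ) * d (π (τ (π⁻¹ j))) - (n : ℤ) * d (σ j)
      = b * (c (π (π⁻¹ j + 1)) - c (j + 1)) := by linarith
  exact Int.modEq_iff_dvd.mpr ⟨_, this⟩
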